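/- In the two-player interconnected contest with Tullock contest success function with parameter γ ∈ (0,1], in every Nash equilibrium (e_1, e_2) the sum of the two players' payoffs satisfies Π_1(e_1,e_2) + Π_2(e_1,e_2) = Σ_{k∈B} (1 − 2γ p_1^k p_2^k) v^k = Σ_{k∈B} v^k − (2 c_1 c_2/(c_1 + c_2)) Σ_{k∈B} (e_1^k + e_2^k), where p_i^k are the equilibrium winning probabilities. -/

import Mathlib

open Finset Matrix

/-- Effective effort of a player with spillover matrix `ρ` and effort vector `e`
at battlefield `k`: `y^k = e^k + ∑_{l ≠ k} ρ^{l,k} e^l`. -/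
noncomputable def effY {m : ℕ} (ρ : Matrix (Fin m) (Fin m) ℝ) (e : Fin m → ℝ)
    (k : Fin m) : ℝ :=
  e k + ∑ l ∈ Finset.univ.erase k, ρ l k * e l

/-- Tullock contest success function with parameter `γ`.  When both effective
efforts are `0` this gives `0/0 = 0`, matching the convention. -/
noncomputable def tullock (γ y₁ y₂ : ℝ) : ℝ :=
  y₁ ^ γ / (y₁ ^ γ + y₂ ^ γ)

/-- Payoff of player `i` in the interconnected contest. -/
noncomputable def payoff {m : ℕ} (γ : ℝ) (v : Fin m → ℝ) (c : Fin 2 → ℝ)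
    (ρ : Fin 2 → Matrix (Fin m) (Fin m) ℝ) (e : Fin 2 → Fin m → ℝ) (i : Fin 2) : ℝ :=
  (∑ k, v k * tullock γ (effY (ρ i) (e i) k) (effY (ρ (1 - i)) (e (1 - i)) k))
    - c i * ∑ k, e i k

/-- Pure strategy Nash equilibrium of the interconnected contest:
nonnegative efforts, and no profitable deviation to any nonnegative effort vector. -/
def IsNashEq {m : ℕ} (γ : ℝ) (v : Fin m → ℝ) (c : Fin 2 → ℝ)
    (ρ : Fin 2 → Matrix (Fin m) (Fin m) ℝ) (e : Fin 2 → Fin m → ℝ) : Prop :=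
  (∀ i k, 0 ≤ e i k) ∧
  ∀ (i : Fin 2) (e' : Fin m → ℝ), (∀ k, 0 ≤ e' k) →
    payoff γ v c ρ (Function.update e i e') i ≤ payoff γ v c ρ e i

/-- Winning probability of player `i` at battlefield `k` under profile `e`. -/
noncomputable def eqProb {m : ℕ} (γ : ℝ) (ρ : Fin 2 → Matrix (Fin m) (Fin m) ℝ)
    (e : Fin 2 → Fin m → ℝ) (i : Fin 2) (k : Fin m) : ℝ :=
  tullock γ (effY (ρ i) (e i) k) (effY (ρ (1 - i)) (e (1 - i)) k)



lemma tullock_nonneg {γ y₁ y₂ : ℝ} (h1 : 0 ≤ y₁) (h2 : 0 ≤ y₂) :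
    0 ≤ tullock γ y₁ y₂ := by
  unfold tullock
  positivity

lemma tullock_add (γ : ℝ) (hγ : 0 < γ) {y₁ y₂ : ℝ} (h1 : 0 ≤ y₁) (h2 : 0 ≤ y₂)
    (h : 0 < y₁ + y₂) : tullock γ y₁ y₂ + tullock γ y₂ y₁ = 1 := by
  have hpos : 0 < y₁ ^ γ + y₂ ^ γ := by
    rcases lt_or_ge 0 y₁ with h' | h'
    · have := Real.rpow_pos_of_pos h' γ
      positivity
    · have hy1 : y₁ = 0 := le_antisymm h' h1
      have hy2 : 0 < y₂ := by linarith
      have := Real.rpow_pos_of_pos hy2 γ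
      positivity
  unfold tullock
  rw [add_comm (y₂ ^ γ) (y₁ ^ γ)]
  field_simp

lemma tullock_mono (γ : ℝ) (hγ : 0 < γ) {y₁ y₁' y₂ : ℝ} (h1 : 0 ≤ y₁) (h2 : 0 ≤ y₂)
    (hle : y₁ ≤ y₁') : tullock γ y₁ y₂ ≤ tullock γ y₁' y₂ := by
  have h1' : 0 ≤ y₁' := le_trans h1 hle
  have ha : y₁ ^ γ ≤ y₁' ^ γ := Real.rpow_le_rpow h1 hle hγ.le
  have ha0 : 0 ≤ y₁ ^ γ := Real.rpow_nonneg h1 γ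
  have hb0 : 0 ≤ y₂ ^ γ := Real.rpow_nonneg h2 γ
  unfold tullock
  rcases eq_or_lt_of_le (by positivity : (0:ℝ) ≤ y₁' ^ γ + y₂ ^ γ) with h0 | h0
  · have hy1 : y₁ ^ γ = 0 := by nlinarith
    have hy2 : y₂ ^ γ = 0 := by nlinarith
    rw [hy1, ← h0]
    simp [hy2]
  · rcases eq_or_lt_of_le (by positivity : (0:ℝ) ≤ y₁ ^ γ + y₂ ^ γ) with hd | hd
    · rw [← hd]
      simp
      positivity
    · rw [div_le_div_iff₀ hd h0]
      nlinarith

lemma effY_nonneg {m : ℕ} {ρ : Matrix (Fin m) (Fin m) ℝ} {e : Fin m → ℝ}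
    (hρ : ∀ k l, 0 ≤ ρ k l) (he : ∀ k, 0 ≤ e k) (k : Fin m) : 0 ≤ effY ρ e k := by
  unfold effY
  have : 0 ≤ ∑ l ∈ Finset.univ.erase k, ρ l k * e l :=
    Finset.sum_nonneg fun l _ => mul_nonneg (hρ l k) (he l)
  have := he k
  linarith

lemma effY_smul {m : ℕ} (ρ : Matrix (Fin m) (Fin m) ℝ) (e : Fin m → ℝ) (t : ℝ)
    (k : Fin m) : effY ρ (fun l => t * e l) k = t * effY ρ e k := by
  unfold effY
  rw [mul_add, Finset.mul_sum]
  ring_nf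

lemma hasDerivAt_term (γ : ℝ) (hγ0 : 0 < γ) {a b : ℝ} (ha : 0 ≤ a) (hb : 0 ≤ b) :
    HasDerivAt (fun t : ℝ => t ^ γ * a / (t ^ γ * a + b))
      (γ * (a / (a + b)) * (b / (a + b))) 1 := by
  rcases eq_or_lt_of_le ha with ha0 | ha0
  · have : (fun t : ℝ => t ^ γ * a / (t ^ γ * a + b)) = fun _ => 0 := by
      funext t; rw [← ha0]; simp
    rw [this, ← ha0]
    simpa using hasDerivAt_const (1:ℝ) (0:ℝ)
  rcases eq_or_lt_of_le hb with hb0 | hb0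
  · have heq : (fun t : ℝ => t ^ γ * a / (t ^ γ * a + b)) =ᶠ[nhds (1:ℝ)]
        fun _ => (1:ℝ) := by
      filter_upwards [Ioi_mem_nhds (zero_lt_one)] with t ht
      have h1 : 0 < t ^ γ * a := mul_pos (Real.rpow_pos_of_pos ht γ) ha0
      rw [← hb0, add_zero, div_self h1.ne']
    have : HasDerivAt (fun t : ℝ => t ^ γ * a / (t ^ γ * a + b)) 0 1 :=
      (hasDerivAt_const (1:ℝ) (1:ℝ)).congr_of_eventuallyEq heq
    convert this using 1
    rw [← hb0]
    simp
  · have hu : HasDerivAt (fun t : ℝ => t ^ γ) (γ * (1:ℝ) ^ (γ - 1)) 1 :=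
      Real.hasDerivAt_rpow_const (Or.inl one_ne_zero)
    rw [Real.one_rpow, mul_one] at hu
    have hN : HasDerivAt (fun t : ℝ => t ^ γ * a) (γ * a) 1 := hu.mul_const a
    have hD : HasDerivAt (fun t : ℝ => t ^ γ * a + b) (γ * a) 1 := hN.add_const b
    have hne : (1:ℝ) ^ γ * a + b ≠ 0 := by
      rw [Real.one_rpow, one_mul]; positivity
    have hg := hN.fun_div hD hne
    refine hg.congr_deriv ?_
    rw [Real.one_rpow, one_mul]
    have hab : a + b ≠ 0 := by positivity
    field_simp
    ring

lemma payoff_update {m : ℕ} (γ : ℝ) (v : Fin m → ℝ) (c : Fin 2 → ℝ)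
    (ρ : Fin 2 → Matrix (Fin m) (Fin m) ℝ) (e : Fin 2 → Fin m → ℝ)
    (i : Fin 2) (e' : Fin m → ℝ) :
    payoff γ v c ρ (Function.update e i e') i =
      (∑ k, v k * tullock γ (effY (ρ i) e' k) (effY (ρ (1 - i)) (e (1 - i)) k))
        - c i * ∑ k, e' k := by
  have hne : (1 - i) ≠ i := by fin_cases i <;> decide
  unfold payoff
  rw [Function.update_self, Function.update_of_ne hne]

lemma effY_mono {m : ℕ} {ρ : Matrix (Fin m) (Fin m) ℝ} {e e' : Fin m → ℝ}
    (hρ : ∀ k l, 0 ≤ ρ k l) (h : ∀ k, e k ≤ e' k) (k : Fin m) :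
    effY ρ e k ≤ effY ρ e' k := by
  unfold effY
  refine add_le_add (h k) (Finset.sum_le_sum fun l _ => ?_)
  exact mul_le_mul_of_nonneg_left (h l) (hρ l k)

lemma euler {m : ℕ} (γ : ℝ) (hγ0 : 0 < γ) (v : Fin m → ℝ) (c : Fin 2 → ℝ)
    (ρ : Fin 2 → Matrix (Fin m) (Fin m) ℝ) (hρ : ∀ i k l, 0 ≤ ρ i k l)
    (e : Fin 2 → Fin m → ℝ) (he : IsNashEq γ v c ρ e) (i : Fin 2) :
    c i * ∑ k, e i k =
      γ * ∑ k, v k * (eqProb γ ρ e i k * eqProb γ ρ e (1 - i) k) := by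
  set y : Fin 2 → Fin m → ℝ := fun j k => effY (ρ j) (e j) k with hy
  have hynn : ∀ j k, 0 ≤ y j k := fun j k =>
    effY_nonneg (hρ j) (he.1 j) k
  set a : Fin m → ℝ := fun k => (y i k) ^ γ with hadef
  set b : Fin m → ℝ := fun k => (y (1 - i) k) ^ γ with hbdef
  have hann : ∀ k, 0 ≤ a k := fun k => Real.rpow_nonneg (hynn i k) γ
  have hbnn : ∀ k, 0 ≤ b k := fun k => Real.rpow_nonneg (hynn (1 - i) k) γ
  set E : ℝ := ∑ k, e i k with hE
  set F : ℝ → ℝ := fun t =>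
    (∑ k, v k * (t ^ γ * a k / (t ^ γ * a k + b k))) - c i * (t * E) with hF
  -- F has the right derivative at 1
  have hderiv : HasDerivAt F
      ((∑ k, v k * (γ * (a k / (a k + b k)) * (b k / (a k + b k)))) - c i * E) 1 := by
    refine HasDerivAt.sub ?_ ?_
    · exact HasDerivAt.fun_sum fun k _ =>
        (hasDerivAt_term γ hγ0 (hann k) (hbnn k)).const_mul (v k)
    · simpa using ((hasDerivAt_id (1:ℝ)).mul_const E).const_mul (c i)
  -- F 1 is the equilibrium payoff
  have hF1 : F 1 = payoff γ v c ρ e i := by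
    simp only [hF, Real.one_rpow, one_mul]
    rfl
  -- F t is the payoff of the scaled deviation, for t > 0
  have hFt : ∀ t : ℝ, 0 ≤ t →
      F t = payoff γ v c ρ (Function.update e i (fun l => t * e i l)) i := by
    intro t ht
    rw [payoff_update]
    have h1 : ∀ k, effY (ρ i) (fun l => t * e i l) k = t * y i k := fun k =>
      effY_smul (ρ i) (e i) t k
    have h2 : ∀ k, tullock γ (t * y i k) (y (1 - i) k)
        = t ^ γ * a k / (t ^ γ * a k + b k) := by
      intro k
      unfold tullock
      rw [Real.mul_rpow ht (hynn i k)]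
    have h2' : ∀ k, effY (ρ (1 - i)) (e (1 - i)) k = y (1 - i) k := fun k => rfl
    simp only [hF, h1, h2', h2, hE]
    rw [← Finset.mul_sum]
  -- 1 is a local max of F
  have hmax : IsLocalMax F 1 := by
    filter_upwards [Ioi_mem_nhds (zero_lt_one)] with t ht
    rw [hF1, hFt t ht.le]
    exact he.2 i _ fun k => mul_nonneg ht.le (he.1 i k)
  have hzero := hmax.hasDerivAt_eq_zero hderiv
  have hkey : c i * E = ∑ k, v k * (γ * (a k / (a k + b k)) * (b k / (a k + b k))) := by
    linarith
  rw [hkey, Finset.mul_sum]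
  refine Finset.sum_congr rfl fun k _ => ?_
  have hP : eqProb γ ρ e i k = a k / (a k + b k) := rfl
  have hQ : eqProb γ ρ e (1 - i) k = b k / (a k + b k) := by
    have hii : (1 - (1 - i)) = i := by fin_cases i <;> decide
    unfold eqProb tullock
    rw [hii]
    rw [add_comm (b k) (a k)]
  rw [hP, hQ]
  ring

lemma eff_sum_pos {m : ℕ} (γ : ℝ) (hγ0 : 0 < γ) (v : Fin m → ℝ) (hv : ∀ k, 0 < v k)
    (c : Fin 2 → ℝ) (hc : ∀ i, 0 < c i)
    (ρ : Fin 2 → Matrix (Fin m) (Fin m) ℝ) (hρ : ∀ i k l, 0 ≤ ρ i k l)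
    (e : Fin 2 → Fin m → ℝ) (he : IsNashEq γ v c ρ e) (k : Fin m) :
    0 < effY (ρ 0) (e 0) k + effY (ρ 1) (e 1) k := by
  set y : Fin 2 → Fin m → ℝ := fun j l => effY (ρ j) (e j) l with hy
  have hyp : ∀ j l, effY (ρ j) (e j) l = y j l := fun _ _ => rfl
  have hynn : ∀ j l, 0 ≤ y j l := fun j l => effY_nonneg (hρ j) (he.1 j) l
  by_contra hcon
  push_neg at hcon
  have h0 : y 0 k = 0 := le_antisymm (by have := hynn 1 k; linarith) (hynn 0 k)
  have h1 : y 1 k = 0 := le_antisymm (by have := hynn 0 k; linarith) (hynn 1 k)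
  set ε : ℝ := v k / (2 * c 0) with hε
  have hεpos : 0 < ε := by
    have := hv k; have := hc 0; positivity
  set e' : Fin m → ℝ := fun l => e 0 l + ε * (if l = k then 1 else 0) with he'
  have he'k : e' k = e 0 k + ε := by simp [he']
  have he'ne : ∀ l, l ≠ k → e' l = e 0 l := by
    intro l hl; simp [he', hl]
  have he'nn : ∀ l, 0 ≤ e' l := by
    intro l
    rcases eq_or_ne l k with h | h
    · rw [h, he'k]; have := he.1 0 k; linarith
    · rw [he'ne l h]; exact he.1 0 l
  have hle : ∀ l, e 0 l ≤ e' l := by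
    intro l
    rcases eq_or_ne l k with h | h
    · rw [h, he'k]; linarith
    · rw [he'ne l h]
  have hy'mono : ∀ l, y 0 l ≤ effY (ρ 0) e' l := fun l =>
    effY_mono (hρ 0) hle l
  have hy'k : effY (ρ 0) e' k = y 0 k + ε := by
    simp only [← hyp]
    unfold effY
    rw [he'k, Finset.sum_congr rfl (fun l hl => by
      rw [he'ne l (Finset.ne_of_mem_erase hl)] :
      ∀ l ∈ Finset.univ.erase k, ρ 0 l k * e' l = ρ 0 l k * e 0 l)]
    ring
  have hdev := he.2 0 e' he'nn
  rw [payoff_update] at hdev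
  have h10 : (1 - 0 : Fin 2) = 1 := rfl
  rw [h10] at hdev
  simp only [hyp] at hdev
  have hsum' : ∑ l, e' l = (∑ l, e 0 l) + ε := by
    simp only [he']
    rw [Finset.sum_add_distrib]
    congr 1
    rw [← Finset.mul_sum]
    simp
  have hT : ∀ l, v l * tullock γ (y 0 l) (y 1 l)
      ≤ v l * tullock γ (effY (ρ 0) e' l) (y 1 l) := by
    intro l
    exact mul_le_mul_of_nonneg_left
      (tullock_mono γ hγ0 (hynn 0 l) (hynn 1 l) (hy'mono l)) (hv l).le
  have hTk : v k * tullock γ (effY (ρ 0) e' k) (y 1 k)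
      - v k * tullock γ (y 0 k) (y 1 k) = v k := by
    rw [hy'k, h0, h1, zero_add]
    unfold tullock
    rw [Real.zero_rpow hγ0.ne']
    have hεγ : 0 < ε ^ γ := Real.rpow_pos_of_pos hεpos γ
    simp [div_self hεγ.ne']
  have key : v k ≤ ∑ l, (v l * tullock γ (effY (ρ 0) e' l) (y 1 l)
      - v l * tullock γ (y 0 l) (y 1 l)) := by
    rw [← hTk]
    exact Finset.single_le_sum (fun l _ => sub_nonneg.mpr (hT l)) (Finset.mem_univ k)
  rw [Finset.sum_sub_distrib] at key
  have hpay0 : payoff γ v c ρ e 0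
      = (∑ l, v l * tullock γ (y 0 l) (y 1 l)) - c 0 * ∑ l, e 0 l := rfl
  rw [hpay0, hsum'] at hdev
  have hc0ε : c 0 * ε = v k / 2 := by
    rw [hε]
    field_simp [(hc 0).ne']
  have := hv k
  nlinarith [hdev, key]

/-- equilibrium social welfare identity. -/
theorem equilibrium_welfare_identity (m : ℕ) (γ : ℝ) (hγ0 : 0 < γ) (hγ1 : γ ≤ 1)
    (v : Fin m → ℝ) (hv : ∀ k, 0 < v k)
    (c : Fin 2 → ℝ) (hc : ∀ i, 0 < c i)
    (ρ : Fin 2 → Matrix (Fin m) (Fin m) ℝ)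
    (hρ : ∀ i k l, 0 ≤ ρ i k l) (hρd : ∀ i k, ρ i k k = 0)
    (e : Fin 2 → Fin m → ℝ) (he : IsNashEq γ v c ρ e) :
    payoff γ v c ρ e 0 + payoff γ v c ρ e 1 =
      ∑ k, (1 - 2 * γ * (eqProb γ ρ e 0 k * eqProb γ ρ e 1 k)) * v k ∧
    payoff γ v c ρ e 0 + payoff γ v c ρ e 1 =
      ∑ k, v k - (2 * c 0 * c 1 / (c 0 + c 1)) * ∑ k, (e 0 k + e 1 k) := by
  have h10 : (1 - 0 : Fin 2) = 1 := rfl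
  have h01 : (1 - 1 : Fin 2) = 0 := rfl
  set S : ℝ := ∑ k, v k * (eqProb γ ρ e 0 k * eqProb γ ρ e 1 k) with hS
  have heuler0 := euler γ hγ0 v c ρ hρ e he 0
  rw [h10] at heuler0
  have heuler1 := euler γ hγ0 v c ρ hρ e he 1
  rw [h01] at heuler1
  have hS1' : ∑ k, v k * (eqProb γ ρ e 1 k * eqProb γ ρ e 0 k) = S := by
    rw [hS]
    exact Finset.sum_congr rfl fun k _ => by ring
  rw [hS1'] at heuler1
  have hprob : ∀ k, eqProb γ ρ e 0 k + eqProb γ ρ e 1 k = 1 := by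
    intro k
    have hpos := eff_sum_pos γ hγ0 v hv c hc ρ hρ e he k
    unfold eqProb
    rw [h10, h01]
    exact tullock_add γ hγ0 (effY_nonneg (hρ 0) (he.1 0) k)
      (effY_nonneg (hρ 1) (he.1 1) k) hpos
  have hpay0 : payoff γ v c ρ e 0
      = (∑ k, v k * eqProb γ ρ e 0 k) - c 0 * ∑ k, e 0 k := rfl
  have hpay1 : payoff γ v c ρ e 1
      = (∑ k, v k * eqProb γ ρ e 1 k) - c 1 * ∑ k, e 1 k := rfl
  have hsumv : (∑ k, v k * eqProb γ ρ e 0 k) + (∑ k, v k * eqProb γ ρ e 1 k)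
      = ∑ k, v k := by
    rw [← Finset.sum_add_distrib]
    exact Finset.sum_congr rfl fun k _ => by rw [← mul_add, hprob k, mul_one]
  have hRHS1 : ∑ k, (1 - 2 * γ * (eqProb γ ρ e 0 k * eqProb γ ρ e 1 k)) * v k
      = (∑ k, v k) - 2 * γ * S := by
    rw [hS, Finset.mul_sum, ← Finset.sum_sub_distrib]
    exact Finset.sum_congr rfl fun k _ => by ring
  constructor
  · rw [hpay0, hpay1, hRHS1]
    linarith [hsumv, heuler0, heuler1]
  · have hee : ∑ k, (e 0 k + e 1 k) = (∑ k, e 0 k) + ∑ k, e 1 k :=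
      Finset.sum_add_distrib
    have hcc : c 0 + c 1 ≠ 0 := by have := hc 0; have := hc 1; positivity
    have hfrac : (2 * c 0 * c 1 / (c 0 + c 1)) * ((∑ k, e 0 k) + ∑ k, e 1 k)
        = 2 * (γ * S) := by
      rw [← hS] at heuler0
      rw [div_mul_eq_mul_div, div_eq_iff hcc]
      linear_combination 2 * c 1 * heuler0 + 2 * c 0 * heuler1
    rw [hpay0, hpay1, hee, hfrac]
    linarith [hsumv, heuler0, heuler1]
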